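/- Let (X,Σ,μ) be a σ-finite measure space and let (ℰ,ℱ) be a Dirichlet form on L²(X,μ): ℱ is a dense linear subspace of L²(X,μ), ℰ : ℱ×ℱ → ℝ is a symmetric bilinear map with ℰ(u,u) ≥ 0, ℱ is complete under the inner product ℰ₁(u,v) := ℰ(u,v) + ⟨u,v⟩_{L²}, and for every u ∈ ℱ and every normal contraction T : ℝ → ℝ (T(0)=0 and T is 1-Lipschitz) the L²-class of T composed with a representative of u belongs to ℱ and satisfies ℰ(T∘u, T∘u) ≤ ℰ(u,u). Let ℬ := {f : X → ℝ : f bounded and Σ-measurable, whose μ-class belongs to ℱ}, and for f, g ∈ ℬ set ℰ(f,g) := ℰ([f],[g]). Then (ℰ,ℬ) is sup-norm-closable: for every sequence (f_n) ⊂ ℬ with ℰ(f_n−f_m, f_n−f_m) → 0 as n,m → ∞ and sup_{x∈X}|f_n(x)| → 0, one has ℰ(f_n,f_n) → 0. -/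

import Mathlib

open Filter Topology MeasureTheory

/-- A normal contraction: `T 0 = 0` and `T` is 1-Lipschitz. -/
def NormalContraction (T : ℝ → ℝ) : Prop :=
  T 0 = 0 ∧ ∀ x y : ℝ, |T x - T y| ≤ |x - y|

lemma sc_quad_zero {a b : ℝ} (h : ∀ t : ℝ, 0 ≤ a * t ^ 2 + 2 * t * b) : b = 0 := by
  have hd := discrim_le_zero (a := a) (b := 2 * b) (c := 0) (fun x => by nlinarith [h x])
  rw [discrim] at hd
  nlinarith [sq_nonneg b]

noncomputable def sc_clamp (c x : ℝ) : ℝ := max (min x c) (-c)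

lemma sc_abs_min_sub_min (x y c : ℝ) : |min x c - min y c| ≤ |x - y| := by
  have h1 := le_abs_self (x - y)
  have h2 := neg_abs_le (x - y)
  have h3 := abs_nonneg (x - y)
  rcases le_total x c with h | h <;> rcases le_total y c with h' | h'
  · rw [min_eq_left h, min_eq_left h']
  · rw [min_eq_left h, min_eq_right h', abs_sub_le_iff]
    constructor <;> linarith
  · rw [min_eq_right h, min_eq_left h', abs_sub_le_iff]
    constructor <;> linarith
  · rw [min_eq_right h, min_eq_right h']
    simpa using h3

lemma sc_clamp_contraction {c : ℝ} (hc : 0 ≤ c) : NormalContraction (sc_clamp c) := by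
  constructor
  · have : min (0:ℝ) c = 0 := min_eq_left hc
    simp [sc_clamp, this, max_eq_left, neg_nonpos.2 hc]
  · intro x y
    calc |sc_clamp c x - sc_clamp c y| ≤ |min x c - min y c| := abs_max_sub_max_le_abs _ _ _
    _ ≤ |x - y| := sc_abs_min_sub_min x y c

lemma sc_clamp_abs_le {c : ℝ} (hc : 0 ≤ c) (a : ℝ) : |sc_clamp c a| ≤ c := by
  rw [abs_le]
  refine ⟨le_max_right _ _, max_le (le_trans (min_le_right _ _) le_rfl) (by linarith)⟩

lemma sc_clamp_dist {c a b : ℝ} (hb : |b| ≤ c) : |sc_clamp c a - b| ≤ |a - b| := by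
  obtain ⟨hb1, hb2⟩ := abs_le.1 hb
  have h1 := le_abs_self (a - b)
  have h2 := neg_abs_le (a - b)
  have h3 := abs_nonneg (a - b)
  unfold sc_clamp
  rcases le_total a (-c) with hA | hA
  · rw [min_eq_left (by linarith), max_eq_right (by linarith)]
    rw [abs_sub_le_iff]; constructor <;> linarith
  · rcases le_total a c with hB | hB
    · rw [min_eq_left hB, max_eq_left hA]
    · rw [min_eq_right hB, max_eq_left (by linarith)]
      rw [abs_sub_le_iff]; constructor <;> linarith

section bilin

variable {X : Type*} [MeasurableSpace X] {μ : MeasureTheory.Measure X}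

def IsForm (ℱ : Submodule ℝ (Lp ℝ 2 μ)) (e : Lp ℝ 2 μ → Lp ℝ 2 μ → ℝ) : Prop :=
  (∀ u ∈ ℱ, ∀ v ∈ ℱ, e u v = e v u) ∧
  (∀ u ∈ ℱ, ∀ v ∈ ℱ, ∀ w ∈ ℱ, e (u + v) w = e u w + e v w) ∧
  (∀ c : ℝ, ∀ u ∈ ℱ, ∀ v ∈ ℱ, e (c • u) v = c * e u v) ∧
  (∀ u ∈ ℱ, 0 ≤ e u u)

namespace IsForm

variable {ℱ : Submodule ℝ (Lp ℝ 2 μ)} {e : Lp ℝ 2 μ → Lp ℝ 2 μ → ℝ}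
variable (he : IsForm ℱ e)
include he

lemma symm {a b : Lp ℝ 2 μ} (ha : a ∈ ℱ) (hb : b ∈ ℱ) : e a b = e b a := he.1 a ha b hb

lemma add_left {a b u : Lp ℝ 2 μ} (ha : a ∈ ℱ) (hb : b ∈ ℱ) (hu : u ∈ ℱ) :
    e (a + b) u = e a u + e b u := he.2.1 a ha b hb u hu

lemma smul_left (c : ℝ) {a u : Lp ℝ 2 μ} (ha : a ∈ ℱ) (hu : u ∈ ℱ) :
    e (c • a) u = c * e a u := he.2.2.1 c a ha u hu

lemma nonneg {a : Lp ℝ 2 μ} (ha : a ∈ ℱ) : 0 ≤ e a a := he.2.2.2 a ha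

lemma zero_left {u : Lp ℝ 2 μ} (hu : u ∈ ℱ) : e 0 u = 0 := by
  have h := he.smul_left 0 (zero_mem ℱ) hu
  rw [zero_smul] at h
  simpa using h

lemma neg_left {a u : Lp ℝ 2 μ} (ha : a ∈ ℱ) (hu : u ∈ ℱ) : e (-a) u = -(e a u) := by
  rw [← neg_one_smul ℝ a, he.smul_left (-1) ha hu]; ring

lemma sub_left {a b u : Lp ℝ 2 μ} (ha : a ∈ ℱ) (hb : b ∈ ℱ) (hu : u ∈ ℱ) :
    e (a - b) u = e a u - e b u := by
  rw [sub_eq_add_neg, he.add_left ha (neg_mem hb) hu, he.neg_left hb hu]; ring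

lemma add_right {a b u : Lp ℝ 2 μ} (ha : a ∈ ℱ) (hb : b ∈ ℱ) (hu : u ∈ ℱ) :
    e u (a + b) = e u a + e u b := by
  rw [he.symm hu (add_mem ha hb), he.add_left ha hb hu, he.symm ha hu, he.symm hb hu]

lemma smul_right (c : ℝ) {a u : Lp ℝ 2 μ} (ha : a ∈ ℱ) (hu : u ∈ ℱ) :
    e u (c • a) = c * e u a := by
  rw [he.symm hu (Submodule.smul_mem ℱ c ha), he.smul_left c ha hu, he.symm ha hu]

lemma sub_right {a b u : Lp ℝ 2 μ} (ha : a ∈ ℱ) (hb : b ∈ ℱ) (hu : u ∈ ℱ) :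
    e u (a - b) = e u a - e u b := by
  rw [he.symm hu (sub_mem ha hb), he.sub_left ha hb hu, he.symm ha hu, he.symm hb hu]

lemma expand_add {a b : Lp ℝ 2 μ} (ha : a ∈ ℱ) (hb : b ∈ ℱ) :
    e (a + b) (a + b) = e a a + 2 * e a b + e b b := by
  rw [he.add_left ha hb (add_mem ha hb), he.add_right ha hb ha, he.add_right ha hb hb,
    he.symm hb ha]
  ring

lemma expand_sub {a b : Lp ℝ 2 μ} (ha : a ∈ ℱ) (hb : b ∈ ℱ) :
    e (a - b) (a - b) = e a a - 2 * e a b + e b b := by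
  rw [he.sub_left ha hb (sub_mem ha hb), he.sub_right ha hb ha, he.sub_right ha hb hb,
    he.symm hb ha]
  ring

lemma parallelogram {a b : Lp ℝ 2 μ} (ha : a ∈ ℱ) (hb : b ∈ ℱ) :
    e (a - b) (a - b) = 2 * e a a + 2 * e b b - e (a + b) (a + b) := by
  rw [he.expand_sub ha hb, he.expand_add ha hb]; ring

lemma neg_neg' {a : Lp ℝ 2 μ} (ha : a ∈ ℱ) : e (-a) (-a) = e a a := by
  rw [he.neg_left ha (neg_mem ha), he.symm ha (neg_mem ha), he.neg_left ha ha]; ring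

lemma cs {a b : Lp ℝ 2 μ} (ha : a ∈ ℱ) (hb : b ∈ ℱ) :
    |e a b| ≤ Real.sqrt (e a a) * Real.sqrt (e b b) := by
  have key : ∀ t : ℝ, 0 ≤ e b b * (t * t) + (2 * e a b) * t + e a a := by
    intro t
    have h0 := he.nonneg (add_mem ha (Submodule.smul_mem ℱ t hb))
    have : e (a + t • b) (a + t • b) = e a a + 2 * (t * e a b) + t * (t * e b b) := by
      rw [he.expand_add ha (Submodule.smul_mem ℱ t hb), he.smul_right t hb ha,
        he.smul_left t hb (Submodule.smul_mem ℱ t hb), he.smul_right t hb hb]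
    nlinarith [h0, this]
  have hd := discrim_le_zero key
  rw [discrim] at hd
  have habs : |e a b| ≤ Real.sqrt (e a a * e b b) := by
    rw [← Real.sqrt_sq_eq_abs]
    exact Real.sqrt_le_sqrt (by nlinarith)
  rwa [Real.sqrt_mul (he.nonneg ha)] at habs

lemma sqrt_tri {a b : Lp ℝ 2 μ} (ha : a ∈ ℱ) (hb : b ∈ ℱ) :
    Real.sqrt (e (a + b) (a + b)) ≤ Real.sqrt (e a a) + Real.sqrt (e b b) := by
  have h1 : e (a + b) (a + b) ≤ (Real.sqrt (e a a) + Real.sqrt (e b b)) ^ 2 := by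
    have hcs := he.cs ha hb
    have e1 : Real.sqrt (e a a) ^ 2 = e a a := Real.sq_sqrt (he.nonneg ha)
    have e2 : Real.sqrt (e b b) ^ 2 = e b b := Real.sq_sqrt (he.nonneg hb)
    rw [he.expand_add ha hb]
    nlinarith [abs_nonneg (e a b), le_abs_self (e a b)]
  calc Real.sqrt (e (a + b) (a + b)) ≤ Real.sqrt ((Real.sqrt (e a a) + Real.sqrt (e b b)) ^ 2) :=
        Real.sqrt_le_sqrt h1
  _ = Real.sqrt (e a a) + Real.sqrt (e b b) := by
        rw [Real.sqrt_sq (by positivity)]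

lemma sqrt_tri' {a b : Lp ℝ 2 μ} (ha : a ∈ ℱ) (hb : b ∈ ℱ) :
    Real.sqrt (e a a) ≤ Real.sqrt (e (a - b) (a - b)) + Real.sqrt (e b b) := by
  have := he.sqrt_tri (sub_mem ha hb) hb
  rwa [sub_add_cancel] at this

end IsForm

end bilin

section proj

variable {X : Type*} [MeasurableSpace X] {μ : MeasureTheory.Measure X}

open MeasureTheory Filter Topology in
lemma exists_proj (ℱ : Submodule ℝ (Lp ℝ 2 μ)) (ℰ : Lp ℝ 2 μ → Lp ℝ 2 μ → ℝ)
    (hsym : ∀ u ∈ ℱ, ∀ v ∈ ℱ, ℰ u v = ℰ v u)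
    (hlin_add : ∀ u ∈ ℱ, ∀ v ∈ ℱ, ∀ w ∈ ℱ, ℰ (u + v) w = ℰ u w + ℰ v w)
    (hlin_smul : ∀ c : ℝ, ∀ u ∈ ℱ, ∀ v ∈ ℱ, ℰ (c • u) v = c * ℰ u v)
    (hnonneg : ∀ u ∈ ℱ, 0 ≤ ℰ u u)
    (hcomplete : ∀ u : ℕ → Lp ℝ 2 μ, (∀ n, u n ∈ ℱ) →
      (∀ ε : ℝ, 0 < ε → ∃ N, ∀ n ≥ N, ∀ m ≥ N,
        ℰ (u n - u m) (u n - u m) + ‖u n - u m‖ ^ 2 < ε) →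
      ∃ v ∈ ℱ, Filter.Tendsto (fun n => ℰ (u n - v) (u n - v) + ‖u n - v‖ ^ 2)
        Filter.atTop (nhds 0))
    (V : Set (Lp ℝ 2 μ)) (hV0 : (0 : Lp ℝ 2 μ) ∈ V)
    (hVadd : ∀ a ∈ V, ∀ b ∈ V, a + b ∈ V)
    (hVsmul : ∀ c : ℝ, ∀ a ∈ V, c • a ∈ V)
    (hVF : ∀ a ∈ V, a ∈ ℱ)
    (L : Lp ℝ 2 μ → ℝ)
    (hLadd : ∀ a ∈ ℱ, ∀ b ∈ ℱ, L (a + b) = L a + L b)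
    (hLsmul : ∀ c : ℝ, ∀ a ∈ ℱ, L (c • a) = c * L a)
    (C : ℝ)
    (hLbdd : ∀ a ∈ ℱ, |L a| ≤ C * Real.sqrt (ℰ a a + ‖a‖ ^ 2)) :
    ∃ v ∈ ℱ, (∀ δ : ℝ, 0 < δ → ∃ y ∈ V, ℰ (v - y) (v - y) + ‖v - y‖ ^ 2 < δ) ∧
      ∀ h ∈ V, ℰ v h + (inner ℝ v h : ℝ) = L h := by
  classical
  set q : Lp ℝ 2 μ → Lp ℝ 2 μ → ℝ := fun x y => ℰ x y + (inner ℝ x y : ℝ) with hqdef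
  have hq : IsForm ℱ q := by
    refine ⟨?_, ?_, ?_, ?_⟩
    · intro a ha b hb; simp only [q]; rw [hsym a ha b hb, real_inner_comm]
    · intro a ha b hb w hw; simp only [q]
      rw [hlin_add a ha b hb w hw, inner_add_left]; ring
    · intro c a ha b hb; simp only [q]
      rw [hlin_smul c a ha b hb, real_inner_smul_left]; ring
    · intro a ha; simp only [q]
      have h1 := hnonneg a ha
      have h2 : (0:ℝ) ≤ inner ℝ a a := real_inner_self_nonneg
      linarith
  have hQ : ∀ x : Lp ℝ 2 μ, ℰ x x + ‖x‖ ^ 2 = q x x := by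
    intro x; simp only [q]; rw [real_inner_self_eq_norm_sq]
  have hLb' : ∀ a ∈ ℱ, |L a| ≤ C * Real.sqrt (q a a) := by
    intro a ha; rw [← hQ]; exact hLbdd a ha
  set F : Lp ℝ 2 μ → ℝ := fun y => q y y - 2 * L y with hFdef
  have hFlb : ∀ y ∈ V, -(C ^ 2) ≤ F y := by
    intro y hy
    have h1 := hLb' y (hVF y hy)
    have h2 : Real.sqrt (q y y) ^ 2 = q y y := Real.sq_sqrt (hq.nonneg (hVF y hy))
    have h3 := abs_le.1 h1
    simp only [F]
    nlinarith [sq_nonneg (Real.sqrt (q y y) - C)]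
  have hne : (F '' V).Nonempty := ⟨F 0, 0, hV0, rfl⟩
  have hbb : BddBelow (F '' V) := ⟨-(C ^ 2), by rintro _ ⟨z, hz, rfl⟩; exact hFlb z hz⟩
  set m := sInf (F '' V) with hmdef
  have hm_le : ∀ z ∈ V, m ≤ F z := fun z hz => csInf_le hbb ⟨z, hz, rfl⟩
  have hseq : ∀ k : ℕ, ∃ z, z ∈ V ∧ F z < m + 1 / (k + 1) := by
    intro k
    have hm2 : m < m + 1 / (k + 1) := lt_add_of_pos_right _ (by positivity)
    obtain ⟨_, ⟨z, hz, rfl⟩, h2⟩ := exists_lt_of_csInf_lt hne hm2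
    exact ⟨z, hz, h2⟩
  choose y hyV hyF using hseq
  have hyFF : ∀ k, y k ∈ ℱ := fun k => hVF _ (hyV k)
  -- parallelogram Cauchy estimate
  have hpar : ∀ k j : ℕ, q (y k - y j) (y k - y j) < 2 / (k + 1) + 2 / (j + 1) := by
    intro k j
    set s := y k + y j with hsdef
    have hsF : s ∈ ℱ := add_mem (hyFF k) (hyFF j)
    have hmidV : ((1:ℝ)/2) • s ∈ V := hVsmul _ _ (hVadd _ (hyV k) _ (hyV j))
    have hqmid : q (((1:ℝ)/2) • s) (((1:ℝ)/2) • s) = (1/4) * q s s := by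
      rw [hq.smul_left ((1:ℝ)/2) hsF (Submodule.smul_mem ℱ _ hsF),
        hq.smul_right ((1:ℝ)/2) hsF hsF]
      ring
    have hLmid : L (((1:ℝ)/2) • s) = (1/2) * (L (y k) + L (y j)) := by
      rw [hLsmul ((1:ℝ)/2) s hsF, hLadd _ (hyFF k) _ (hyFF j)]
    have hpar0 : q (y k - y j) (y k - y j) =
        2 * q (y k) (y k) + 2 * q (y j) (y j) - q s s :=
      hq.parallelogram (hyFF k) (hyFF j)
    have h1 := hyF k
    have h2 := hyF j
    have h3 := hm_le _ hmidV
    simp only [F] at h1 h2 h3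
    rw [hqmid, hLmid] at h3
    have e1 : 2 / ((k:ℝ) + 1) = 2 * (1 / ((k:ℝ) + 1)) := by ring
    have e2 : 2 / ((j:ℝ) + 1) = 2 * (1 / ((j:ℝ) + 1)) := by ring
    rw [e1, e2]
    clear_value q F m s
    linarith
  -- completeness
  have hcc : ∀ ε : ℝ, 0 < ε → ∃ N, ∀ n ≥ N, ∀ m' ≥ N,
      ℰ (y n - y m') (y n - y m') + ‖y n - y m'‖ ^ 2 < ε := by
    intro ε hε
    obtain ⟨N, hN⟩ := exists_nat_gt (4 / ε)
    refine ⟨N, fun n hn m' hm' => ?_⟩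
    rw [hQ]
    have hNn : (0:ℝ) < (N:ℝ) + 1 := by positivity
    have h4 : (4:ℝ) / (N + 1) < ε := by
      rw [div_lt_iff₀ hNn]
      have h5 : 4 / ε < (N:ℝ) + 1 := lt_of_lt_of_le hN (by linarith)
      have h6 : (4:ℝ) = (4 / ε) * ε := by field_simp
      nlinarith
    have hn1 : 2 / ((n:ℝ) + 1) ≤ 2 / ((N:ℝ) + 1) := by
      apply div_le_div_of_nonneg_left (by norm_num) hNn
      exact_mod_cast by omega
    have hm1 : 2 / ((m':ℝ) + 1) ≤ 2 / ((N:ℝ) + 1) := by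
      apply div_le_div_of_nonneg_left (by norm_num) hNn
      exact_mod_cast by omega
    have := hpar n m'
    have heq : 2 / ((N:ℝ) + 1) + 2 / ((N:ℝ) + 1) = 4 / ((N:ℝ)+1) := by ring
    clear_value q F m
    linarith
  obtain ⟨v, hvF, htend⟩ := hcomplete y hyFF hcc
  have htendq : Filter.Tendsto (fun k => q (y k - v) (y k - v)) Filter.atTop (nhds 0) := by
    simpa only [hQ] using htend
  refine ⟨v, hvF, ?_, ?_⟩
  · -- approximation
    intro δ hδ
    have hev := htendq.eventually (gt_mem_nhds hδ)
    obtain ⟨k, hk⟩ := hev.exists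
    refine ⟨y k, hyV k, ?_⟩
    rw [hQ]
    have : v - y k = -(y k - v) := by abel
    rw [this, hq.neg_neg' (sub_mem (hyFF k) hvF)]
    exact hk
  · -- Euler-Lagrange
    intro h hhV
    have hhF := hVF h hhV
    set gk : ℕ → ℝ := fun k => q (y k) h - L h with hgkdef
    set g : ℝ := q v h - L h with hgdef
    have hgk : Filter.Tendsto gk Filter.atTop (nhds g) := by
      have hb : ∀ k, |gk k - g| ≤ Real.sqrt (q (y k - v) (y k - v)) * Real.sqrt (q h h) := by
        intro k
        have : gk k - g = q (y k - v) h := by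
          rw [hq.sub_left (hyFF k) hvF hhF]; simp only [gk, g]; ring
        rw [this]
        exact hq.cs (sub_mem (hyFF k) hvF) hhF
      have hs : Filter.Tendsto (fun k => Real.sqrt (q (y k - v) (y k - v)) * Real.sqrt (q h h))
          Filter.atTop (nhds 0) := by
        have h1 := (Real.continuous_sqrt.tendsto' 0 0 Real.sqrt_zero).comp htendq
        simpa using h1.mul_const (Real.sqrt (q h h))
      have h0 : Filter.Tendsto (fun k => gk k - g) Filter.atTop (nhds 0) :=
        squeeze_zero_norm hb hs
      have := h0.add_const g
      simpa using this
    have hlim : ∀ t : ℝ, 0 ≤ q h h * t ^ 2 + 2 * t * g := by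
      intro t
      have hkey : ∀ k : ℕ, 0 ≤ q h h * t ^ 2 + 2 * t * gk k + 1 / (k + 1) := by
        intro k
        have hmem : y k + t • h ∈ V := hVadd _ (hyV k) _ (hVsmul t _ hhV)
        have h2 := hm_le _ hmem
        have hthF : t • h ∈ ℱ := Submodule.smul_mem ℱ t hhF
        have hexp : F (y k + t • h) = F (y k) + q h h * t ^ 2 + 2 * t * gk k + 2 * t * L h
            - 2 * t * L h := by
          simp only [F]
          rw [hq.expand_add (hyFF k) hthF, hLadd _ (hyFF k) _ hthF, hLsmul t h hhF,
            hq.smul_right t hhF (hyFF k),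
            hq.smul_left t hhF hthF, hq.smul_right t hhF hhF]
          simp only [gk]
          ring
        have h3 := hyF k
        rw [hexp] at h2
        clear_value q F m gk g
        linarith
      have h1 : Filter.Tendsto (fun k : ℕ => q h h * t ^ 2 + 2 * t * gk k + 1 / (k + 1))
          Filter.atTop (nhds (q h h * t ^ 2 + 2 * t * g + 0)) := by
        exact (tendsto_const_nhds.add (hgk.const_mul (2 * t))).add
          tendsto_one_div_add_atTop_nhds_zero_nat
      have h2 := ge_of_tendsto h1 (Filter.Eventually.of_forall hkey)
      linarith
    have hg0 : g = 0 := sc_quad_zero hlim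
    have : q v h = L h := by simp only [g] at hg0; linarith
    simpa only [q] using this

end proj
section markov

variable {X : Type*} [MeasurableSpace X] {μ : MeasureTheory.Measure X}

open MeasureTheory in
lemma markov_bound (ℱ : Submodule ℝ (Lp ℝ 2 μ)) (ℰ : Lp ℝ 2 μ → Lp ℝ 2 μ → ℝ)
    (hsym : ∀ u ∈ ℱ, ∀ v ∈ ℱ, ℰ u v = ℰ v u)
    (hlin_add : ∀ u ∈ ℱ, ∀ v ∈ ℱ, ∀ w ∈ ℱ, ℰ (u + v) w = ℰ u w + ℰ v w)
    (hlin_smul : ∀ c : ℝ, ∀ u ∈ ℱ, ∀ v ∈ ℱ, ℰ (c • u) v = c * ℰ u v)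
    (hnonneg : ∀ u ∈ ℱ, 0 ≤ ℰ u u)
    (hcontr : ∀ u : Lp ℝ 2 μ, u ∈ ℱ → ∀ T : ℝ → ℝ, NormalContraction T →
      ∃ w ∈ ℱ, (⇑w : X → ℝ) =ᵐ[μ] (fun x => T (u x)) ∧ ℰ w w ≤ ℰ u u)
    (g v : Lp ℝ 2 μ) (hv : v ∈ ℱ)
    (hEL : ∀ h ∈ ℱ, ℰ v h + (inner ℝ v h : ℝ) = (inner ℝ g h : ℝ))
    (c : ℝ) (hc : 0 ≤ c) (hg : ∀ᵐ x ∂μ, |g x| ≤ c) :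
    ∀ᵐ x ∂μ, |v x| ≤ c := by
  obtain ⟨w, hwF, hwae, hwE⟩ := hcontr v hv (sc_clamp c) (sc_clamp_contraction hc)
  have hform : IsForm ℱ ℰ := ⟨hsym, hlin_add, hlin_smul, hnonneg⟩
  have hae2 : ∀ᵐ x ∂μ, ‖(⇑(w - g) : X → ℝ) x‖ ≤ ‖(⇑(v - g) : X → ℝ) x‖ := by
    filter_upwards [Lp.coeFn_sub w g, Lp.coeFn_sub v g, hwae, hg] with x h1 h2 h3 h4
    rw [h1, h2]
    simp only [Pi.sub_apply, Real.norm_eq_abs]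
    rw [h3]
    exact sc_clamp_dist h4
  have hnorm : ‖w - g‖ ≤ ‖v - g‖ := by
    rw [Lp.norm_def, Lp.norm_def]
    exact ENNReal.toReal_mono (Lp.eLpNorm_ne_top _) (eLpNorm_mono_ae hae2)
  have hdF : w - v ∈ ℱ := sub_mem hwF hv
  have hEL2 := hEL (w - v) hdF
  have hvd : w = v + (w - v) := by abel
  have hew : ℰ w w = ℰ v v + 2 * ℰ v (w - v) + ℰ (w - v) (w - v) := by
    nth_rewrite 1 [hvd]
    nth_rewrite 2 [hvd]
    rw [hform.expand_add hv hdF]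
  have hwg : w - g = (v - g) + (w - v) := by abel
  have hnw : ‖w - g‖ ^ 2 = ‖v - g‖ ^ 2 + 2 * (inner ℝ (v - g) (w - v) : ℝ) + ‖w - v‖ ^ 2 := by
    rw [hwg, norm_add_sq_real]
  have hinner : (inner ℝ (v - g) (w - v) : ℝ) = (inner ℝ v (w - v) : ℝ) - (inner ℝ g (w - v) : ℝ) :=
    inner_sub_left v g (w - v)
  have hsq : ‖w - g‖ ^ 2 ≤ ‖v - g‖ ^ 2 :=
    pow_le_pow_left₀ (norm_nonneg _) hnorm 2
  have hfinal : ℰ (w - v) (w - v) + ‖w - v‖ ^ 2 ≤ 0 := by linarith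
  have hd0 : w - v = 0 := by
    have h1 : ‖w - v‖ ^ 2 ≤ 0 := by have := hform.nonneg hdF; linarith
    have h2 : ‖w - v‖ = 0 := by nlinarith [norm_nonneg (w - v)]
    exact norm_eq_zero.1 h2
  have hwv : w = v := by rwa [sub_eq_zero] at hd0
  rw [hwv] at hwae
  filter_upwards [hwae] with x hx
  rw [hx]
  exact sc_clamp_abs_le hc _

open MeasureTheory in
lemma pairing_dense (w : Lp ℝ 2 μ)
    (hw : ∀ g : Lp ℝ 2 μ, Integrable (⇑g) μ → (inner ℝ w g : ℝ) = 0) : w = 0 := by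
  have hφm : StronglyMeasurable (⇑w : X → ℝ) := Lp.stronglyMeasurable w
  have hmem : MemLp (⇑w : X → ℝ) 2 μ := Lp.memLp w
  have hsq : Integrable (fun x => (w x) ^ 2) μ := hmem.integrable_sq
  set A : ℕ → Set X := fun n => {x | 1 / (n + 1 : ℝ) ≤ |w x| ∧ |w x| ≤ (n + 1 : ℝ)} with hA
  have hAmeas : ∀ n, MeasurableSet (A n) := by
    intro n
    have h1 : MeasurableSet {x | 1 / (n + 1 : ℝ) ≤ |w x|} :=
      measurableSet_le measurable_const hφm.measurable.abs
    have h2 : MeasurableSet {x | |w x| ≤ (n + 1 : ℝ)} :=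
      measurableSet_le hφm.measurable.abs measurable_const
    exact h1.inter h2
  have hAfin : ∀ n, μ (A n) < ⊤ := by
    intro n
    have hsub : A n ⊆ {x | (1 / (n + 1 : ℝ)) ^ 2 ≤ (w x) ^ 2} := by
      intro x hx
      obtain ⟨hx1, _⟩ := hx
      simp only [Set.mem_setOf_eq]
      have h1 : (0:ℝ) ≤ 1 / ((n:ℝ) + 1) := by positivity
      have h2 := mul_self_le_mul_self h1 hx1
      nlinarith [sq_abs ((w : X → ℝ) x)]
    exact lt_of_le_of_lt (measure_mono hsub) (hsq.measure_ge_lt_top (by positivity))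
  set gn : ℕ → X → ℝ := fun n => (A n).indicator (⇑w) with hgn
  have hgmeas : ∀ n, StronglyMeasurable (gn n) := fun n => hφm.indicator (hAmeas n)
  have hgle : ∀ n x, ‖gn n x‖ ≤ ‖w x‖ := by
    intro n x
    by_cases hx : x ∈ A n <;>
      simp [gn, Set.indicator_of_mem, Set.indicator_of_notMem, hx]
  have hgmem : ∀ n, MemLp (gn n) 2 μ := fun n =>
    hmem.of_le (hgmeas n).aestronglyMeasurable (Filter.Eventually.of_forall (hgle n))
  have hgint : ∀ n, Integrable (gn n) μ := by
    intro n
    have hbnd : Integrable ((A n).indicator (fun _ => (n + 1 : ℝ))) μ := by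
      rw [integrable_indicator_iff (hAmeas n)]
      exact integrableOn_const (hAfin n).ne
    apply hbnd.mono' (hgmeas n).aestronglyMeasurable
    apply Filter.Eventually.of_forall
    intro x
    by_cases hx : x ∈ A n
    · simp only [gn, Set.indicator_of_mem hx, Real.norm_eq_abs]
      exact hx.2
    · simp [gn, Set.indicator_of_notMem hx]
  have hz : ∀ n, ∫ x, w x * gn n x ∂μ = 0 := by
    intro n
    have h0 := hw ((hgmem n).toLp (gn n)) (((hgint n)).congr ((hgmem n).coeFn_toLp).symm)
    rw [L2.inner_def] at h0
    rw [← h0]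
    apply integral_congr_ae
    filter_upwards [(hgmem n).coeFn_toLp] with x hx
    rw [hx]
    simp [RCLike.inner_apply, mul_comm]
  have hrepr : ∀ n x, w x * gn n x = (A n).indicator (fun x => (w x) ^ 2) x := by
    intro n x
    by_cases hx : x ∈ A n <;>
      simp [gn, Set.indicator_of_mem, Set.indicator_of_notMem, hx, sq]
  have hlim : Filter.Tendsto (fun n => ∫ x, (A n).indicator (fun x => (w x) ^ 2) x ∂μ)
      Filter.atTop (nhds (∫ x, (w x) ^ 2 ∂μ)) := by
    apply tendsto_integral_of_dominated_convergence (fun x => (w x) ^ 2)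
    · exact fun n => (hsq.aestronglyMeasurable.indicator (hAmeas n))
    · exact hsq
    · intro n
      apply Filter.Eventually.of_forall
      intro x
      by_cases hx : x ∈ A n <;>
        simp [Set.indicator_of_mem, Set.indicator_of_notMem, hx, sq_nonneg,
          abs_of_nonneg (sq_nonneg (w x))]
    · apply Filter.Eventually.of_forall
      intro x
      by_cases hx0 : w x = 0
      · have : ∀ n, (A n).indicator (fun x => (w x) ^ 2) x = 0 := by
          intro n
          have : x ∉ A n := by
            intro hmem'
            have := hmem'.1
            rw [hx0] at this
            simp at this
            have : (0:ℝ) < 1 / (n + 1 : ℝ) := by positivity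
            linarith [hmem'.1, abs_nonneg (w x)]
          simp [Set.indicator_of_notMem this]
        rw [show (fun n => (A n).indicator (fun x => (w x) ^ 2) x) = fun _ => (0:ℝ) from
          funext this, hx0]
        simpa using tendsto_const_nhds
      · have habs : 0 < |w x| := abs_pos.2 hx0
        obtain ⟨n0, hn0⟩ := exists_nat_gt (max (1 / |w x|) |w x|)
        have hev : ∀ n ≥ n0, (A n).indicator (fun x => (w x) ^ 2) x = (w x) ^ 2 := by
          intro n hn
          have hc : (n0:ℝ) ≤ (n:ℝ) + 1 := by exact_mod_cast by omega
          have h2 : 1 / |(w : X → ℝ) x| ≤ (n:ℝ) + 1 := by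
            have h3 := le_max_left (1 / |(w : X → ℝ) x|) |(w : X → ℝ) x|
            linarith
          have h1 : 1 / ((n:ℝ) + 1) ≤ |(w : X → ℝ) x| := by
            rw [div_le_iff₀ (by positivity : (0:ℝ) < (n:ℝ) + 1)]
            rw [div_le_iff₀ habs] at h2
            nlinarith
          have h2' : |(w : X → ℝ) x| ≤ (n:ℝ) + 1 := by
            have h3 := le_max_right (1 / |(w : X → ℝ) x|) |(w : X → ℝ) x|
            linarith
          have hxA : x ∈ A n := by
            simp only [hA, Set.mem_setOf_eq]
            exact ⟨h1, h2'⟩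
          exact Set.indicator_of_mem hxA _
        apply Filter.Tendsto.congr' _ (tendsto_const_nhds (x := (w x) ^ 2))
        filter_upwards [Filter.eventually_ge_atTop n0] with n hn
        exact (hev n hn).symm
  have hint0 : ∫ x, (w x) ^ 2 ∂μ = 0 := by
    have h2 : Filter.Tendsto (fun _ : ℕ => (0:ℝ)) Filter.atTop (nhds (∫ x, (w x) ^ 2 ∂μ)) := by
      apply hlim.congr
      intro n
      rw [show (∫ x, (A n).indicator (fun x => (w x) ^ 2) x ∂μ) = ∫ x, w x * gn n x ∂μ from
        integral_congr_ae (Filter.Eventually.of_forall fun x => (hrepr n x).symm), hz n]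
    exact tendsto_nhds_unique h2 tendsto_const_nhds
  have hae0 : (fun x => (w x) ^ 2) =ᵐ[μ] 0 :=
    (integral_eq_zero_iff_of_nonneg (fun x => sq_nonneg _) hsq).1 hint0
  rw [Lp.eq_zero_iff_ae_eq_zero]
  filter_upwards [hae0] with x hx
  simpa [pow_eq_zero_iff] using hx

end markov

set_option maxHeartbeats 1000000

/-- Theorem: a Dirichlet form `(ℰ,ℱ)` on `L²(X,μ)` (with `μ` σ-finite) induces on
`ℬ = {bounded measurable f whose μ-class lies in ℱ}` a sup-norm-closable bilinear form:
if `(f_n) ⊂ ℬ` (with classes `u_n ∈ ℱ`) is `ℰ`-Cauchy and `‖f_n‖_sup → 0`, then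
`ℰ(f_n,f_n) → 0`. -/
theorem statement_14 {X : Type*} [MeasurableSpace X] (μ : Measure X) [SigmaFinite μ]
    (ℱ : Submodule ℝ (Lp ℝ 2 μ))
    (hdense : Dense (ℱ : Set (Lp ℝ 2 μ)))
    (ℰ : Lp ℝ 2 μ → Lp ℝ 2 μ → ℝ)
    (hsym : ∀ u ∈ ℱ, ∀ v ∈ ℱ, ℰ u v = ℰ v u)
    (hlin_add : ∀ u ∈ ℱ, ∀ v ∈ ℱ, ∀ w ∈ ℱ, ℰ (u + v) w = ℰ u w + ℰ v w)
    (hlin_smul : ∀ c : ℝ, ∀ u ∈ ℱ, ∀ v ∈ ℱ, ℰ (c • u) v = c * ℰ u v)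
    (hnonneg : ∀ u ∈ ℱ, 0 ≤ ℰ u u)
    -- `ℱ` is complete under the inner product `ℰ₁(u,v) = ℰ(u,v) + ⟨u,v⟩_{L²}`
    (hcomplete : ∀ u : ℕ → Lp ℝ 2 μ, (∀ n, u n ∈ ℱ) →
      (∀ ε : ℝ, 0 < ε → ∃ N, ∀ n ≥ N, ∀ m ≥ N,
        ℰ (u n - u m) (u n - u m) + ‖u n - u m‖ ^ 2 < ε) →
      ∃ v ∈ ℱ, Tendsto (fun n => ℰ (u n - v) (u n - v) + ‖u n - v‖ ^ 2) atTop (𝓝 0))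
    -- normal contractions operate on `(ℰ,ℱ)`
    (hcontr : ∀ u : Lp ℝ 2 μ, u ∈ ℱ → ∀ T : ℝ → ℝ, NormalContraction T →
      ∃ w ∈ ℱ, (⇑w : X → ℝ) =ᵐ[μ] (fun x => T (u x)) ∧ ℰ w w ≤ ℰ u u) :
    ∀ (f : ℕ → X → ℝ) (u : ℕ → Lp ℝ 2 μ),
      (∀ n, Measurable (f n)) → (∀ n, ∃ C : ℝ, ∀ x, |f n x| ≤ C) →
      (∀ n, u n ∈ ℱ) → (∀ n, (⇑(u n) : X → ℝ) =ᵐ[μ] f n) →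
      (∀ ε : ℝ, 0 < ε → ∃ N, ∀ n ≥ N, ∀ m ≥ N, ℰ (u n - u m) (u n - u m) < ε) →
      Tendsto (fun n => ⨆ x, |f n x|) atTop (𝓝 0) →
      Tendsto (fun n => ℰ (u n) (u n)) atTop (𝓝 0) := by
  intro f u hmeas hbdd huF hae hCauchy hsup
  classical
  have hform : IsForm ℱ ℰ := ⟨hsym, hlin_add, hlin_smul, hnonneg⟩
  have hq : IsForm ℱ (fun x y => ℰ x y + (inner ℝ x y : ℝ)) := by
    refine ⟨?_, ?_, ?_, ?_⟩
    · intro a ha b hb; simp only; rw [hsym a ha b hb, real_inner_comm]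
    · intro a ha b hb w hw; simp only
      rw [hlin_add a ha b hb w hw, inner_add_left]; ring
    · intro c a ha b hb; simp only
      rw [hlin_smul c a ha b hb, real_inner_smul_left]; ring
    · intro a ha; simp only
      have h1 := hnonneg a ha
      have h2 : (0:ℝ) ≤ inner ℝ a a := real_inner_self_nonneg
      linarith
  -- sup-norm control
  have hbddA : ∀ m, BddAbove (Set.range fun x => |f m x|) := by
    intro m; obtain ⟨C, hC⟩ := hbdd m
    exact ⟨C, by rintro _ ⟨x, rfl⟩; exact hC x⟩
  have hεnn : ∀ m, 0 ≤ ⨆ x, |f m x| := by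
    intro m
    rcases isEmpty_or_nonempty X with hX | hX
    · haveI := hX
      rw [Real.iSup_of_isEmpty]
    · obtain ⟨x0⟩ := hX
      exact le_trans (abs_nonneg (f m x0)) (le_ciSup (hbddA m) x0)
  have haebdd : ∀ m, ∀ᵐ x ∂μ, |(u m : X → ℝ) x| ≤ ⨆ x, |f m x| := by
    intro m
    filter_upwards [hae m] with x hx
    rw [hx]
    exact le_ciSup (hbddA m) x
  -- the operator B
  have hB : ∀ g : Lp ℝ 2 μ, ∃ b, b ∈ ℱ ∧
      ∀ h ∈ ℱ, ℰ b h + (inner ℝ b h : ℝ) = (inner ℝ g h : ℝ) := by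
    intro g
    have hLb : ∀ a ∈ ℱ, |(inner ℝ g a : ℝ)| ≤ ‖g‖ * Real.sqrt (ℰ a a + ‖a‖ ^ 2) := by
      intro a ha
      have h1 : |(inner ℝ g a : ℝ)| ≤ ‖g‖ * ‖a‖ := abs_real_inner_le_norm g a
      have h2 : ‖a‖ ≤ Real.sqrt (ℰ a a + ‖a‖ ^ 2) := by
        rw [Real.le_sqrt (norm_nonneg a) (by nlinarith [hnonneg a ha, sq_nonneg ‖a‖])]
        nlinarith [hnonneg a ha]
      calc |(inner ℝ g a : ℝ)| ≤ ‖g‖ * ‖a‖ := h1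
      _ ≤ ‖g‖ * Real.sqrt (ℰ a a + ‖a‖ ^ 2) :=
          mul_le_mul_of_nonneg_left h2 (norm_nonneg g)
    obtain ⟨b, hbF, _, hEL⟩ := exists_proj ℱ ℰ hsym hlin_add hlin_smul hnonneg hcomplete
      (ℱ : Set (Lp ℝ 2 μ)) (zero_mem ℱ) (fun a ha b' hb' => add_mem ha hb')
      (fun c a ha => Submodule.smul_mem ℱ c ha) (fun a ha => ha)
      (fun h => (inner ℝ g h : ℝ))
      (fun a _ b' _ => inner_add_right g a b')
      (fun c a _ => real_inner_smul_right g a c)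
      ‖g‖ hLb
    exact ⟨b, hbF, hEL⟩
  choose B hBF hBEL using hB
  -- reduce to epsilon-N
  rw [Metric.tendsto_atTop]
  intro δ hδ
  obtain ⟨N₀, hN₀⟩ := hCauchy 1 one_pos
  set M : ℝ := Real.sqrt (ℰ (u N₀) (u N₀)) + 1 with hM
  have hM1 : 1 ≤ M := by
    have := Real.sqrt_nonneg (ℰ (u N₀) (u N₀)); simp only [hM]; linarith
  have hMn : ∀ n, N₀ ≤ n → Real.sqrt (ℰ (u n) (u n)) ≤ M := by
    intro n hn
    have h1 := hform.sqrt_tri' (huF n) (huF N₀)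
    have h2 : ℰ (u n - u N₀) (u n - u N₀) < 1 := hN₀ n hn N₀ le_rfl
    have h3 : Real.sqrt (ℰ (u n - u N₀) (u n - u N₀)) ≤ 1 := by
      rw [show (1:ℝ) = Real.sqrt 1 from Real.sqrt_one.symm]
      exact Real.sqrt_le_sqrt h2.le
    simp only [hM]
    linarith
  have hM0 : 0 < M := lt_of_lt_of_le one_pos hM1
  set η : ℝ := min 1 (δ / (2 * (Real.sqrt (2 * M) + 1) ^ 2)) with hη
  have hηpos : 0 < η := by
    apply lt_min one_pos
    have h1 : (0:ℝ) < (Real.sqrt (2 * M) + 1) ^ 2 := by positivity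
    positivity
  have hη1 : η ≤ 1 := min_le_left _ _
  obtain ⟨N₁', hN₁'⟩ := hCauchy (η ^ 2) (by positivity)
  set N₁ := max N₀ N₁' with hN₁def
  set v := u N₁ with hvdef
  have hvF : v ∈ ℱ := huF N₁
  have hvM : Real.sqrt (ℰ v v) ≤ M := hMn N₁ (le_max_left _ _)
  -- the set S of L¹-representable elements
  set S : Set (Lp ℝ 2 μ) := {y | y ∈ ℱ ∧ ∃ g : Lp ℝ 2 μ, Integrable (⇑g) μ ∧
    ∀ h ∈ ℱ, ℰ y h + (inner ℝ y h : ℝ) = (inner ℝ g h : ℝ)} with hSdef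
  have hS0 : (0 : Lp ℝ 2 μ) ∈ S := by
    refine ⟨zero_mem ℱ, 0, ?_, ?_⟩
    · exact (integrable_zero X ℝ μ).congr (Lp.coeFn_zero ℝ 2 μ).symm
    · intro h hh
      rw [hform.zero_left hh]
      simp
  have hSadd : ∀ a ∈ S, ∀ b ∈ S, a + b ∈ S := by
    rintro a ⟨haF, ga, hga, hela⟩ b ⟨hbF, gb, hgb, helb⟩
    refine ⟨add_mem haF hbF, ga + gb, ?_, ?_⟩
    · exact (hga.add hgb).congr (Lp.coeFn_add ga gb).symm
    · intro h hh
      rw [hform.add_left haF hbF hh, inner_add_left, inner_add_left]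
      have h1 := hela h hh
      have h2 := helb h hh
      linarith
  have hSsmul : ∀ c : ℝ, ∀ a ∈ S, c • a ∈ S := by
    rintro c a ⟨haF, ga, hga, hela⟩
    refine ⟨Submodule.smul_mem ℱ c haF, c • ga, ?_, ?_⟩
    · exact ((hga.smul c).congr (Lp.coeFn_smul c ga).symm)
    · intro h hh
      rw [hform.smul_left c haF hh, real_inner_smul_left, real_inner_smul_left]
      have h1 := hela h hh
      linear_combination c * h1
  have hSF : ∀ a ∈ S, a ∈ ℱ := fun a ha => ha.1
  -- project v onto the closure of S
  have hLv : ∀ a ∈ ℱ, |ℰ v a + (inner ℝ v a : ℝ)| ≤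
      Real.sqrt (ℰ v v + (inner ℝ v v : ℝ)) * Real.sqrt (ℰ a a + ‖a‖ ^ 2) := by
    intro a ha
    have h1 : |ℰ v a + (inner ℝ v a : ℝ)| ≤
        Real.sqrt (ℰ v v + (inner ℝ v v : ℝ)) * Real.sqrt (ℰ a a + (inner ℝ a a : ℝ)) :=
      hq.cs hvF ha
    rwa [show (inner ℝ a a : ℝ) = ‖a‖ ^ 2 from real_inner_self_eq_norm_sq a] at h1
  obtain ⟨z, hzF, happrox, hzEL⟩ := exists_proj ℱ ℰ hsym hlin_add hlin_smul hnonneg hcomplete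
    S hS0 hSadd hSsmul hSF
    (fun h => ℰ v h + (inner ℝ v h : ℝ))
    (fun a ha b hb => by
      show ℰ v (a + b) + (inner ℝ v (a + b) : ℝ) = _
      rw [hform.add_right ha hb hvF, inner_add_right]; ring)
    (fun c a ha => by
      show ℰ v (c • a) + (inner ℝ v (c • a) : ℝ) = _
      rw [hform.smul_right c ha hvF, real_inner_smul_right]; ring)
    (Real.sqrt (ℰ v v + (inner ℝ v v : ℝ))) hLv
  -- z = v via density of L¹∩L²
  have hzv : v = z := by
    rw [← sub_eq_zero]
    apply pairing_dense
    intro g' hg'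
    have hBg'S : B g' ∈ S := ⟨hBF g', g', hg', hBEL g'⟩
    have h1 := hzEL (B g') hBg'S
    have h2 : ℰ (v - z) (B g') + (inner ℝ (v - z) (B g') : ℝ) = 0 := by
      rw [hform.sub_left hvF hzF (hBF g'), inner_sub_left]
      linarith
    have h3 := hBEL g' (v - z) (sub_mem hvF hzF)
    have h4 : ℰ (v - z) (B g') = ℰ (B g') (v - z) :=
      hform.symm (sub_mem hvF hzF) (hBF g')
    have h5 : (inner ℝ (v - z) (B g') : ℝ) = (inner ℝ (B g') (v - z) : ℝ) := real_inner_comm _ _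
    have h6 : (inner ℝ g' (v - z) : ℝ) = 0 := by linarith
    rw [real_inner_comm]
    exact h6
  obtain ⟨y, hyS, hy⟩ := happrox (η ^ 2) (by positivity)
  rw [← hzv] at hy
  obtain ⟨hyF, g, hgInt, hyEL⟩ := hyS
  set K : ℝ := ∫ x, |(g : X → ℝ) x| ∂μ with hK
  have hK0 : 0 ≤ K := integral_nonneg fun x => abs_nonneg _
  -- pairing bound
  have hpair : ∀ h' : Lp ℝ 2 μ, ∀ c : ℝ, 0 ≤ c → (∀ᵐ x ∂μ, |(h' : X → ℝ) x| ≤ c) →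
      |(inner ℝ g h' : ℝ)| ≤ K * c := by
    intro h' c hc hh'
    have hir : (inner ℝ g h' : ℝ) = ∫ x, (g : X → ℝ) x * (h' : X → ℝ) x ∂μ := by
      rw [L2.inner_def]
      apply integral_congr_ae
      apply Filter.Eventually.of_forall
      intro x
      simp [RCLike.inner_apply, mul_comm]
    have hint : Integrable (fun x => (g : X → ℝ) x * (h' : X → ℝ) x) μ := by
      apply (hgInt.abs.mul_const c).mono'
        (hgInt.aestronglyMeasurable.mul (Lp.aestronglyMeasurable h'))
      filter_upwards [hh'] with x hx
      simp only [Pi.mul_apply, Real.norm_eq_abs, abs_mul]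
      exact mul_le_mul_of_nonneg_left hx (abs_nonneg _)
    rw [hir]
    have hint2 : Integrable (fun x => |(g : X → ℝ) x| * |(h' : X → ℝ) x|) μ :=
      hint.abs.congr (Filter.Eventually.of_forall fun x => by simp [abs_mul])
    have h1 : |∫ x, (g : X → ℝ) x * (h' : X → ℝ) x ∂μ| ≤
        ∫ x, |(g : X → ℝ) x| * |(h' : X → ℝ) x| ∂μ := by
      have := norm_integral_le_integral_norm (μ := μ) (fun x => (g : X → ℝ) x * (h' : X → ℝ) x)
      simpa [Real.norm_eq_abs, abs_mul] using this
    have h2 : ∫ x, |(g : X → ℝ) x| * |(h' : X → ℝ) x| ∂μ ≤ ∫ x, |(g : X → ℝ) x| * c ∂μ := by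
      apply integral_mono_ae hint2 (hgInt.abs.mul_const c)
      filter_upwards [hh'] with x hx
      exact mul_le_mul_of_nonneg_left hx (abs_nonneg _)
    rw [integral_mul_const] at h2
    linarith
  -- main estimate for fixed m
  have hstep : ∀ m, N₁ ≤ m → ℰ v v ≤ 2 * M * η + 2 * K * (⨆ x, |f m x|) := by
    intro m hm
    have hm0 : N₀ ≤ m := le_trans (le_max_left _ _) hm
    have e1 : ℰ v (v - u m) = ℰ v v - ℰ v (u m) := hform.sub_right hvF (huF m) hvF
    have e2 : ℰ (v - y) (u m) = ℰ v (u m) - ℰ y (u m) := hform.sub_left hvF hyF (huF m)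
    have b3 : ℰ y (u m) + (inner ℝ y (u m) : ℝ) = (inner ℝ g (u m) : ℝ) := hyEL (u m) (huF m)
    -- swap: ⟪y, u m⟫ = ⟪g, B (u m)⟫
    have hswap : (inner ℝ y (u m) : ℝ) = (inner ℝ g (B (u m)) : ℝ) := by
      have h1 := hyEL (B (u m)) (hBF (u m))
      have h2 := hBEL (u m) y hyF
      have h3 : ℰ y (B (u m)) = ℰ (B (u m)) y := hform.symm hyF (hBF (u m))
      have h4 : (inner ℝ y (B (u m)) : ℝ) = (inner ℝ (B (u m)) y : ℝ) := real_inner_comm _ _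
      have h5 : (inner ℝ y (u m) : ℝ) = (inner ℝ (u m) y : ℝ) := real_inner_comm _ _
      linarith
    have hBum := markov_bound ℱ ℰ hsym hlin_add hlin_smul hnonneg hcontr (u m) (B (u m))
      (hBF (u m)) (hBEL (u m)) (⨆ x, |f m x|) (hεnn m) (haebdd m)
    have b4 : |(inner ℝ g (u m) : ℝ)| ≤ K * (⨆ x, |f m x|) :=
      hpair (u m) _ (hεnn m) (haebdd m)
    have b5 : |(inner ℝ g (B (u m)) : ℝ)| ≤ K * (⨆ x, |f m x|) :=
      hpair (B (u m)) _ (hεnn m) hBum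
    -- CS bounds
    have b1 : |ℰ v (v - u m)| ≤ M * η := by
      have hcs := hform.cs hvF (sub_mem hvF (huF m))
      have hlt : ℰ (v - u m) (v - u m) < η ^ 2 :=
        hN₁' N₁ (le_max_right _ _) m (le_trans (le_max_right _ _) hm)
      have hsq : Real.sqrt (ℰ (v - u m) (v - u m)) ≤ η := by
        rw [show η = Real.sqrt (η ^ 2) from (Real.sqrt_sq hηpos.le).symm]
        exact Real.sqrt_le_sqrt hlt.le
      calc |ℰ v (v - u m)| ≤ Real.sqrt (ℰ v v) * Real.sqrt (ℰ (v - u m) (v - u m)) := hcs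
      _ ≤ M * η := mul_le_mul hvM hsq (Real.sqrt_nonneg _) hM0.le
    have b2 : |ℰ (v - y) (u m)| ≤ η * M := by
      have hcs := hform.cs (sub_mem hvF hyF) (huF m)
      have hle : ℰ (v - y) (v - y) ≤ η ^ 2 := by nlinarith [sq_nonneg ‖v - y‖]
      have hsq : Real.sqrt (ℰ (v - y) (v - y)) ≤ η := by
        rw [show η = Real.sqrt (η ^ 2) from (Real.sqrt_sq hηpos.le).symm]
        exact Real.sqrt_le_sqrt hle
      calc |ℰ (v - y) (u m)| ≤
          Real.sqrt (ℰ (v - y) (v - y)) * Real.sqrt (ℰ (u m) (u m)) := hcs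
      _ ≤ η * M := mul_le_mul hsq (hMn m hm0) (Real.sqrt_nonneg _) hηpos.le
    have habs1 := abs_le.1 b1
    have habs2 := abs_le.1 b2
    have habs4 := abs_le.1 b4
    have habs5 := abs_le.1 b5
    -- ℰ v v = ℰ v (v - u m) + ℰ (v - y) (u m) + ⟪g, u m⟫ - ⟪y, u m⟫  (with hswap)
    rw [hswap] at b3
    linarith
  -- pass to the limit in m
  have hEvv : ℰ v v ≤ 2 * M * η := by
    by_contra hcon
    push_neg at hcon
    set θ : ℝ := (ℰ v v - 2 * M * η) / (2 * K + 1) with hθ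
    have hθpos : 0 < θ := by
      apply div_pos (by linarith) (by linarith)
    rw [Metric.tendsto_atTop] at hsup
    obtain ⟨m₂, hm₂⟩ := hsup θ hθpos
    set m := max N₁ m₂ with hm
    have h1 := hstep m (le_max_left _ _)
    have h2 := hm₂ m (le_max_right _ _)
    rw [Real.dist_eq, sub_zero, abs_of_nonneg (hεnn m)] at h2
    have h3 : 2 * K * (⨆ x, |f m x|) ≤ 2 * K * θ :=
      mul_le_mul_of_nonneg_left h2.le (by linarith)
    have h4 : 2 * K * θ < ℰ v v - 2 * M * η := by
      have h5 : (0:ℝ) < 2 * K + 1 := by linarith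
      rw [hθ, ← mul_div_assoc, div_lt_iff₀ h5]
      nlinarith
    clear_value θ m v M η K
    linarith
  -- conclude
  refine ⟨N₁, fun n hn => ?_⟩
  rw [Real.dist_eq, sub_zero, abs_of_nonneg (hform.nonneg (huF n))]
  have t1 := hform.sqrt_tri' (huF n) hvF
  have t2 : Real.sqrt (ℰ (u n - v) (u n - v)) ≤ η := by
    have hlt : ℰ (u n - v) (u n - v) < η ^ 2 :=
      hN₁' n (le_trans (le_max_right _ _) hn) N₁ (le_max_right _ _)
    rw [show η = Real.sqrt (η ^ 2) from (Real.sqrt_sq hηpos.le).symm]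
    exact Real.sqrt_le_sqrt hlt.le
  have t3 : Real.sqrt (ℰ v v) ≤ Real.sqrt (2 * M * η) := Real.sqrt_le_sqrt hEvv
  have t4 : Real.sqrt (2 * M * η) = Real.sqrt (2 * M) * Real.sqrt η :=
    Real.sqrt_mul (by linarith) η
  have t5 : η ≤ Real.sqrt η := by
    have hs1 : Real.sqrt η * Real.sqrt η = η := Real.mul_self_sqrt hηpos.le
    have hs2 : Real.sqrt η ≤ 1 := by
      rw [show (1:ℝ) = Real.sqrt 1 from Real.sqrt_one.symm]
      exact Real.sqrt_le_sqrt hη1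
    nlinarith [Real.sqrt_nonneg η]
  have t6 : Real.sqrt (ℰ (u n) (u n)) ≤ (Real.sqrt (2 * M) + 1) * Real.sqrt η := by
    rw [t4] at t3
    nlinarith [Real.sqrt_nonneg η]
  have t7 : ℰ (u n) (u n) ≤ ((Real.sqrt (2 * M) + 1) * Real.sqrt η) ^ 2 := by
    rw [show ℰ (u n) (u n) = Real.sqrt (ℰ (u n) (u n)) ^ 2 from
      (Real.sq_sqrt (hform.nonneg (huF n))).symm]
    exact pow_le_pow_left₀ (Real.sqrt_nonneg _) t6 2
  have t8 : ((Real.sqrt (2 * M) + 1) * Real.sqrt η) ^ 2 =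
      (Real.sqrt (2 * M) + 1) ^ 2 * η := by
    rw [mul_pow, Real.sq_sqrt hηpos.le]
  have hη2 : η ≤ δ / (2 * (Real.sqrt (2 * M) + 1) ^ 2) := min_le_right _ _
  have hP : (0:ℝ) < (Real.sqrt (2 * M) + 1) ^ 2 := by positivity
  have t9 : (Real.sqrt (2 * M) + 1) ^ 2 * η ≤ δ / 2 := by
    rw [le_div_iff₀ (by norm_num : (0:ℝ) < 2)]
    rw [le_div_iff₀ (by positivity : (0:ℝ) < 2 * (Real.sqrt (2 * M) + 1) ^ 2)] at hη2
    nlinarith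
  linarith
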